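/- Let (s,σ) be a weakly symmetric s-section of a crossed extension of G by M. Then the associated 3-cocycle f(x,y,z) = {}^{s(x)}σ(y,z)·σ(x,yz)·σ(xy,z)^{-1}·σ(x,y)^{-1} satisfies f(x,x^{-1},y) = 0 and f(x,y,y^{-1}) = 0 for all x,y (hence is a normalized symmetric 3-cocycle) if and only if (s,σ) is a symmetric s-section. -/
import Mathlib


/-- For a weakly symmetric s-section `(s,σ)` of a crossed
extension, the associated 3-cocycle `f` satisfies `f(x,x⁻¹,y) = 1` and
`f(x,y,y⁻¹) = 1` for all `x,y` (multiplicative notation in `M = ker ∂`)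
iff `(s,σ)` is a symmetric s-section. -/
theorem stmt16 {T R G : Type*} [Group T] [Group R] [Group G]
    [MulDistribMulAction R T] (δ : T →* R)
    (hpeif1 : ∀ (r : R) (t : T), δ (r • t) = r * δ t * r⁻¹)
    (hpeif2 : ∀ t u : T, (δ t) • u = t * u * t⁻¹)
    (p : R →* G) (hp : Function.Surjective p)
    (hexact : ∀ r : R, p r = 1 ↔ r ∈ δ.range)
    (s : G → R) (σ : G → G → T)
    (hs : ∀ x, p (s x) = x)
    (hσ : ∀ x y, s x * s y = δ (σ x y) * s (x * y))
    (hs1 : s 1 = 1) (hσ1 : ∀ x, σ 1 x = 1 ∧ σ x 1 = 1)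
    -- weakly symmetric
    (hsinv : ∀ x, s x⁻¹ = (s x)⁻¹) (hσinv : ∀ x, σ x x⁻¹ = 1)
    (f : G → G → G → T)
    (hf : ∀ x y z, f x y z =
      (s x • σ y z) * σ x (y * z) * (σ (x * y) z)⁻¹ * (σ x y)⁻¹) :
    (∀ x y : G, f x x⁻¹ y = 1 ∧ f x y y⁻¹ = 1)
    ↔ ((∀ x y : G, σ x y * (s x • σ x⁻¹ (x * y)) = 1) ∧
      (∀ x y : G, σ x y * σ (x * y) y⁻¹ = 1)) := by
  constructor
  · intro h
    constructor
    · intro x y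
      have h1 := (h x (x * y)).1
      rw [hf] at h1
      simp only [hσinv, mul_inv_cancel, (hσ1 _).1, inv_mul_cancel_left, inv_one, mul_one] at h1
      have : s x • σ x⁻¹ (x * y) = (σ x y)⁻¹ := eq_inv_of_mul_eq_one_left h1
      rw [this, mul_inv_cancel]
    · intro x y
      have h1 := (h x y).2
      rw [hf] at h1
      simp only [hσinv, mul_inv_cancel, (hσ1 _).2, smul_one, one_mul] at h1
      have h3 : σ x y = (σ (x * y) y⁻¹)⁻¹ := by
        rw [← inv_inv (σ x y)]; exact inv_eq_of_mul_eq_one_left h1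
      rw [h3, inv_mul_cancel]
  · intro ⟨h1, h2⟩ x y
    constructor
    · rw [hf]
      simp only [hσinv, mul_inv_cancel, (hσ1 _).1, inv_one, mul_one]
      have := h1 x (x⁻¹ * y)
      rw [mul_inv_cancel_left] at this
      rw [eq_inv_of_mul_eq_one_right this, inv_mul_cancel]
    · rw [hf]
      have := h2 x y
      simp only [hσinv, mul_inv_cancel, (hσ1 _).2, smul_one, one_mul]
      have h3 : σ (x * y) y⁻¹ = (σ x y)⁻¹ := eq_inv_of_mul_eq_one_right this
      rw [h3, inv_inv, mul_inv_cancel]
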